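/- Let H be a weighted graph with connected components H_1,…,H_m. Let t = ν(H) + 1 and t_i = ν(H_i) + 1 for i = 1,…,m. Then H is t-saturating if and only if H_i is t_i-saturating for every i = 1,…,m. -/

import Mathlib

open MvPolynomial
open scoped Classical

noncomputable section

/-! ### Weighted graphs and matchings -/

/-- Number of times the vertex `v` appears in the multiset of edges `M`. -/
def edgeCount {α : Type*} (M : Multiset (Sym2 α)) (v : α) : ℕ :=
  Multiset.countP (fun e => v ∈ e) M

/-- A matching of the weighted graph `(G, w)`: a family of edges of `G` (with repetitions
allowed) such that every vertex appears in these edges no more times than its weight.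
Vertices of weight `0` are regarded as not belonging to the weighted graph. -/
def IsWMatching {α : Type*} (G : SimpleGraph α) (w : α → ℕ) (M : Multiset (Sym2 α)) : Prop :=
  (∀ e ∈ M, e ∈ G.edgeSet) ∧ ∀ v, edgeCount M v ≤ w v

/-- The matching number of the weighted graph `(G, w)`. -/
def nu {α : Type*} (G : SimpleGraph α) (w : α → ℕ) : ℕ :=
  sSup {m | ∃ M : Multiset (Sym2 α), IsWMatching G w M ∧ Multiset.card M = m}

/-- `deg_w(i) = Σ_{j ∈ N_w(i)} w j`, the sum of the weights of the neighbours of `i`. -/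
def wdeg {α : Type*} [Fintype α] (G : SimpleGraph α) (w : α → ℕ) (i : α) : ℕ :=
  ∑ j : α, if G.Adj i j then w j else 0

/-- The weighted graph obtained from `(G, w)` by deleting the (open) neighbourhood of `i`. -/
def delNbr {α : Type*} (G : SimpleGraph α) (w : α → ℕ) (i : α) : α → ℕ :=
  fun j => if G.Adj i j then 0 else w j

/-- The weighted graph obtained from `(G, w)` by deleting the vertices of `N`. -/
def delSet {α : Type*} (w : α → ℕ) (N : Set α) : α → ℕ :=
  fun j => if j ∈ N then 0 else w j

/-- A weighted graph `H = (G, w)` is `t`-saturating if `ν(H) < t` and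
`ν(H − N_H(i)) ≥ t − deg_H(i)` for every vertex `i` of `H`. -/
def TSaturating {α : Type*} [Fintype α] (G : SimpleGraph α) (w : α → ℕ) (t : ℕ) : Prop :=
  nu G w < t ∧ ∀ i, 0 < w i → t ≤ nu G (delNbr G w i) + wdeg G w i

/-- A weighted graph `H = (G, w)` is strongly `t`-saturating if `ν(H) < t` and
`ν(H − j) ≥ t − w j` for every vertex `j` of `H`. -/
def StronglyTSaturating {α : Type*} (G : SimpleGraph α) (w : α → ℕ) (t : ℕ) : Prop :=
  nu G w < t ∧ ∀ j, 0 < w j → t ≤ nu G (delSet w {j}) + w j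

/-! ### Covers, cores, neighbourhoods -/

/-- A (vertex) cover of a graph. -/
def IsVCover {α : Type*} (G : SimpleGraph α) (F : Set α) : Prop :=
  ∀ ⦃i j⦄, G.Adj i j → i ∈ F ∨ j ∈ F

/-- A minimal (vertex) cover of a graph. -/
def IsMinimalVCover {α : Type*} (G : SimpleGraph α) (F : Set α) : Prop :=
  IsVCover G F ∧ ∀ F', IsVCover G F' → F' ⊆ F → F' = F

/-- `core(F)`: the set of vertices of `F` which are not adjacent to any vertex outside `F`. -/
def graphCore {α : Type*} (G : SimpleGraph α) (F : Set α) : Set α :=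
  {i | i ∈ F ∧ ∀ j, G.Adj i j → j ∈ F}

/-- The closed neighbourhood `N[U]` of a set of vertices `U`. -/
def closedNbhd {α : Type*} (G : SimpleGraph α) (U : Set α) : Set α :=
  U ∪ {v | ∃ u ∈ U, G.Adj u v}

/-- `F` is minimal among the covers of `G` containing `S`. -/
def MinimalCoverOver {α : Type*} (G : SimpleGraph α) (S F : Set α) : Prop :=
  IsVCover G F ∧ S ⊆ F ∧ ∀ F', IsVCover G F' → S ⊆ F' → F' ⊆ F → F' = F

/-- `W` is a dominating set: every vertex outside `W` is adjacent to a vertex of `W`. -/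
def IsDominating {α : Type*} (G : SimpleGraph α) (W : Set α) : Prop :=
  ∀ v, v ∉ W → ∃ u ∈ W, G.Adj u v

/-- Every connected component of `H` contains an odd cycle of length at most `L`. -/
def ComponentOddCycleLe {β : Type*} (H : SimpleGraph β) (L : ℕ) : Prop :=
  ∀ c : H.ConnectedComponent, ∃ (v : β) (cyc : H.Walk v v),
    H.connectedComponentMk v = c ∧ cyc.IsCycle ∧ Odd cyc.length ∧ cyc.length ≤ L

/-- Every connected component of `H` contains an odd cycle. -/
def ComponentOddCycle {β : Type*} (H : SimpleGraph β) : Prop :=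
  ∀ c : H.ConnectedComponent, ∃ (v : β) (cyc : H.Walk v v),
    H.connectedComponentMk v = c ∧ cyc.IsCycle ∧ Odd cyc.length

/-! ### Edge ideals -/

/-- The edge ideal of a simple graph. -/
def edgeIdeal (k : Type*) [CommRing k] {σ : Type*} (G : SimpleGraph σ) :
    Ideal (MvPolynomial σ k) :=
  Ideal.span {p | ∃ i j, G.Adj i j ∧ p = X i * X j}

/-- The maximal homogeneous ideal `(x_1, …, x_n)`. -/
def maxIdeal (k : Type*) [CommRing k] (σ : Type*) : Ideal (MvPolynomial σ k) :=
  Ideal.span (Set.range (X : σ → MvPolynomial σ k))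

/-- `P_F`, the ideal generated by the variables `x_i`, `i ∈ F`. -/
def varIdeal (k : Type*) [CommRing k] {σ : Type*} (F : Set σ) : Ideal (MvPolynomial σ k) :=
  Ideal.span ((fun i => (X i : MvPolynomial σ k)) '' F)

/-- The monomial `x^a`. -/
def monom (k : Type*) [CommRing k] {n : ℕ} (a : Fin n → ℕ) : MvPolynomial (Fin n) k :=
  ∏ i : Fin n, (X i : MvPolynomial (Fin n) k) ^ a i

/-- `f` belongs to the saturation `J̃ = ⋃_{m ≥ 1} (J : 𝔪^m)` of `J`. -/
def inSaturation (k : Type*) [CommRing k] {σ : Type*} (J : Ideal (MvPolynomial σ k))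
    (f : MvPolynomial σ k) : Prop :=
  ∃ m : ℕ, f ∈ Submodule.colon J (((maxIdeal k σ) ^ m : Ideal (MvPolynomial σ k)) : Set (MvPolynomial σ k))

/-- `P` is an associated prime of the ideal `J`, i.e. of the module `R ⧸ J`. -/
def assocPrime {R : Type*} [CommRing R] (J P : Ideal R) : Prop :=
  P ∈ associatedPrimes R (R ⧸ J)

/-- `P` is an embedded associated prime of `J`: an associated prime of `R ⧸ J` which is
not a minimal prime of `J`. -/
def embeddedAssocPrime {R : Type*} [CommRing R] (J P : Ideal R) : Prop :=
  assocPrime J P ∧ P ∉ J.minimalPrimes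

/-- The five configurations appearing in the description of `Ass(I³)`: a triangle; a union
of an edge and a triangle meeting at exactly one vertex; a union of two vertex-disjoint
triangles with no edges between them; a union of two triangles meeting at exactly one
vertex; a pentagon. `W` is the vertex set of the subgraph. -/
def Config3 {α : Type*} (G : SimpleGraph α) (W : Set α) : Prop :=
  (∃ u v w : α, u ≠ v ∧ u ≠ w ∧ v ≠ w ∧ G.Adj u v ∧ G.Adj v w ∧ G.Adj u w ∧
    W = {u, v, w}) ∨
  (∃ i j h v : α, [i, j, h, v].Pairwise (· ≠ ·) ∧ G.Adj i j ∧ G.Adj j h ∧ G.Adj i h ∧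
    G.Adj i v ∧ W = {i, j, h, v}) ∨
  (∃ u₁ v₁ w₁ u₂ v₂ w₂ : α, [u₁, v₁, w₁, u₂, v₂, w₂].Pairwise (· ≠ ·) ∧
    G.Adj u₁ v₁ ∧ G.Adj v₁ w₁ ∧ G.Adj u₁ w₁ ∧ G.Adj u₂ v₂ ∧ G.Adj v₂ w₂ ∧ G.Adj u₂ w₂ ∧
    (∀ x ∈ ({u₁, v₁, w₁} : Set α), ∀ y ∈ ({u₂, v₂, w₂} : Set α), ¬ G.Adj x y) ∧
    W = {u₁, v₁, w₁, u₂, v₂, w₂}) ∨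
  (∃ i j h u v : α, [i, j, h, u, v].Pairwise (· ≠ ·) ∧
    G.Adj i j ∧ G.Adj j h ∧ G.Adj i h ∧ G.Adj i u ∧ G.Adj u v ∧ G.Adj i v ∧
    W = {i, j, h, u, v}) ∨
  (∃ p : Fin 5 → α, Function.Injective p ∧ (∀ i : Fin 5, G.Adj (p i) (p (i + 1))) ∧
    W = Set.range p)

end

section Aux
variable {α : Type*}

lemma card_le_sum_edgeCount [Fintype α] (M : Multiset (Sym2 α)) :
    Multiset.card M ≤ ∑ v, edgeCount M v := by
  induction M using Multiset.induction with
  | empty => simp [edgeCount]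
  | cons a M ih =>
    obtain ⟨x, hx⟩ : ∃ x : α, x ∈ a := ⟨a.out.1, Sym2.out_fst_mem a⟩
    have hsum : ∑ v, edgeCount (a ::ₘ M) v
        = (∑ v, edgeCount M v) + ∑ v : α, (if v ∈ a then 1 else 0) := by
      simp [edgeCount, Multiset.countP_cons, Finset.sum_add_distrib]
    have h1 : (1:ℕ) ≤ ∑ v : α, (if v ∈ a then 1 else 0) := by
      have := Finset.single_le_sum (f := fun v : α => if v ∈ a then (1:ℕ) else 0)
        (fun _ _ => Nat.zero_le _) (Finset.mem_univ x)
      simpa [hx] using this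
    simp only [Multiset.card_cons]
    omega

lemma bddAbove_matchSet [Fintype α] (G : SimpleGraph α) (w : α → ℕ) :
    BddAbove {m | ∃ M, IsWMatching G w M ∧ Multiset.card M = m} := by
  refine ⟨∑ v, w v, ?_⟩
  rintro m ⟨M, ⟨-, hM⟩, rfl⟩
  calc Multiset.card M ≤ ∑ v, edgeCount M v := card_le_sum_edgeCount M
    _ ≤ ∑ v, w v := Finset.sum_le_sum fun v _ => hM v

lemma le_nu [Fintype α] {G : SimpleGraph α} {w : α → ℕ} {M : Multiset (Sym2 α)}
    (h : IsWMatching G w M) : Multiset.card M ≤ nu G w :=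
  le_csSup (bddAbove_matchSet G w) ⟨M, h, rfl⟩

lemma exists_max_matching [Fintype α] (G : SimpleGraph α) (w : α → ℕ) :
    ∃ M, IsWMatching G w M ∧ Multiset.card M = nu G w := by
  have hne : {m | ∃ M, IsWMatching G w M ∧ Multiset.card M = m}.Nonempty :=
    ⟨0, 0, ⟨by simp, fun v => by simp [edgeCount]⟩, by simp⟩
  exact Nat.sSup_mem hne (bddAbove_matchSet G w)

lemma nu_split [Fintype α] (G : SimpleGraph α) (w w1 w2 : α → ℕ) (P : α → Prop)
    (hadj : ∀ a b, G.Adj a b → (P a ↔ P b))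
    (hsum : ∀ v, w v = w1 v + w2 v)
    (h1 : ∀ v, ¬ P v → w1 v = 0) (h2 : ∀ v, P v → w2 v = 0) :
    nu G w = nu G w1 + nu G w2 := by
  classical
  apply le_antisymm
  · obtain ⟨M, hM, hcard⟩ := exists_max_matching G w
    set p : Sym2 α → Prop := fun e => ∀ x ∈ e, P x with hp
    have key : ∀ v e, e ∈ M → v ∈ e → (P v ↔ p e) := by
      intro v e he hv
      induction e with
      | _ a b =>
        have hab : G.Adj a b := G.mem_edgeSet.1 (hM.1 _ he)
        have hPab := hadj a b hab
        rcases Sym2.mem_iff.1 hv with rfl | rfl <;>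
          · constructor
            · intro hPv x hx
              rcases Sym2.mem_iff.1 hx with rfl | rfl <;> tauto
            · intro h
              exact h _ hv
    have hM1 : IsWMatching G w1 (M.filter p) := by
      constructor
      · intro e he; exact hM.1 e (Multiset.mem_of_mem_filter he)
      · intro v
        by_cases hPv : P v
        · have : edgeCount (M.filter p) v ≤ edgeCount M v :=
            Multiset.countP_le_of_le _ (Multiset.filter_le _ _)
          have := hM.2 v
          have := hsum v
          have := h2 v hPv
          omega
        · have : edgeCount (M.filter p) v = 0 := by
            rw [edgeCount, Multiset.countP_eq_zero]
            intro e he hv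
            obtain ⟨heM, hpe⟩ := Multiset.mem_filter.1 he
            exact hPv ((key v e heM hv).2 hpe)
          omega
    have hM2 : IsWMatching G w2 (M.filter fun e => ¬ p e) := by
      constructor
      · intro e he; exact hM.1 e (Multiset.mem_of_mem_filter he)
      · intro v
        by_cases hPv : P v
        · have : edgeCount (M.filter fun e => ¬ p e) v = 0 := by
            rw [edgeCount, Multiset.countP_eq_zero]
            intro e he hv
            obtain ⟨heM, hpe⟩ := Multiset.mem_filter.1 he
            exact hpe ((key v e heM hv).1 hPv)
          omega
        · have : edgeCount (M.filter fun e => ¬ p e) v ≤ edgeCount M v :=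
            Multiset.countP_le_of_le _ (Multiset.filter_le _ _)
          have := hM.2 v
          have := hsum v
          have := h1 v hPv
          omega
    have hsplit : Multiset.card (M.filter p) + Multiset.card (M.filter fun e => ¬ p e)
        = Multiset.card M := by
      rw [← Multiset.card_add, Multiset.filter_add_not]
    have := le_nu hM1
    have := le_nu hM2
    omega
  · obtain ⟨M1, hM1, hc1⟩ := exists_max_matching G w1
    obtain ⟨M2, hM2, hc2⟩ := exists_max_matching G w2
    have : IsWMatching G w (M1 + M2) := by
      constructor
      · intro e he
        rcases Multiset.mem_add.1 he with h | h
        · exact hM1.1 e h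
        · exact hM2.1 e h
      · intro v
        have : edgeCount (M1 + M2) v = edgeCount M1 v + edgeCount M2 v :=
          Multiset.countP_add _ _ _
        have := hM1.2 v
        have := hM2.2 v
        have := hsum v
        omega
    have := le_nu this
    simp only [Multiset.card_add] at this
    omega

end Aux

theorem stmt7' {α : Type*} [Fintype α] (G : SimpleGraph α) (w : α → ℕ)
    (hw : ∀ i, 0 < w i) :
    TSaturating G w (nu G w + 1) ↔
      ∀ c : G.ConnectedComponent,
        TSaturating G (fun v => if G.connectedComponentMk v = c then w v else 0)
          (nu G (fun v => if G.connectedComponentMk v = c then w v else 0) + 1) := by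
  classical
  have comp_adj : ∀ a b : α, G.Adj a b →
      G.connectedComponentMk a = G.connectedComponentMk b :=
    fun a b h => SimpleGraph.ConnectedComponent.sound h.reachable
  -- key decomposition facts for a fixed vertex i in component c
  have key : ∀ (i : α) (c : G.ConnectedComponent), G.connectedComponentMk i = c →
      (nu G w = nu G (fun v => if G.connectedComponentMk v = c then w v else 0)
        + nu G (fun v => if G.connectedComponentMk v = c then 0 else w v)) ∧
      (nu G (delNbr G w i)
        = nu G (delNbr G (fun v => if G.connectedComponentMk v = c then w v else 0) i)
          + nu G (fun v => if G.connectedComponentMk v = c then 0 else w v)) ∧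
      wdeg G w i = wdeg G (fun v => if G.connectedComponentMk v = c then w v else 0) i := by
    intro i c hic
    set wc : α → ℕ := fun v => if G.connectedComponentMk v = c then w v else 0 with hwc
    set wr : α → ℕ := fun v => if G.connectedComponentMk v = c then 0 else w v with hwr
    have hadj : ∀ a b, G.Adj a b →
        ((G.connectedComponentMk a = c) ↔ (G.connectedComponentMk b = c)) := by
      intro a b h; rw [comp_adj a b h]
    have hnadj : ∀ v, G.connectedComponentMk v ≠ c → ¬ G.Adj i v := by
      intro v hv hA
      exact hv ((comp_adj i v hA) ▸ hic)
    refine ⟨?_, ?_, ?_⟩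
    · exact nu_split G w wc wr (fun v => G.connectedComponentMk v = c) hadj
        (fun v => by by_cases h : G.connectedComponentMk v = c <;> simp [wc, wr, h])
        (fun v h => by simp [wc, h]) (fun v h => by simp [wr, h])
    · refine nu_split G (delNbr G w i) (delNbr G wc i) wr
        (fun v => G.connectedComponentMk v = c) hadj ?_ ?_ (fun v h => by simp [wr, h])
      · intro v
        by_cases h : G.connectedComponentMk v = c
        · simp [delNbr, wc, wr, h]
        · have := hnadj v h
          simp [delNbr, wc, wr, h, this]
      · intro v h
        have := hnadj v h
        simp [delNbr, wc, h, this]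
    · refine Finset.sum_congr rfl fun j _ => ?_
      by_cases h : G.Adj i j
      · have : G.connectedComponentMk j = c := (comp_adj i j h) ▸ hic
        simp [h, wc, this]
      · simp [h]
  constructor
  · rintro ⟨-, hsat⟩ c
    refine ⟨Nat.lt_succ_self _, ?_⟩
    intro i hi
    have hic : G.connectedComponentMk i = c := by
      by_contra h; simp [h] at hi
    have hwi : 0 < w i := by simpa [hic] using hi
    obtain ⟨h1, h2, h3⟩ := key i c hic
    have := hsat i hwi
    omega
  · intro h
    refine ⟨Nat.lt_succ_self _, ?_⟩
    intro i hwi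
    obtain ⟨-, hsat⟩ := h (G.connectedComponentMk i)
    obtain ⟨h1, h2, h3⟩ := key i (G.connectedComponentMk i) rfl
    have := hsat i (by simpa using hwi)
    omega


theorem stmt7 {α : Type*} [Fintype α] (G : SimpleGraph α) (w : α → ℕ)
    (hw : ∀ i, 0 < w i) :
    TSaturating G w (nu G w + 1) ↔
      ∀ c : G.ConnectedComponent,
        TSaturating G (fun v => if G.connectedComponentMk v = c then w v else 0)
          (nu G (fun v => if G.connectedComponentMk v = c then w v else 0) + 1) :=
  stmt7' G w hw
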